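/- For every real x with |x| ≤ 1, the series Σ_{k=0}^{∞} c_k x^{2k+1} converges and its sum equals arcsin(x). -/

import Mathlib

/-- Taylor coefficients of `arcsin`: `c_k = (2k)! / (4^k (k!)^2 (2k+1))`. -/
noncomputable def arcsinCoeff (k : ℕ) : ℝ :=
  (Nat.factorial (2 * k) : ℝ) / (4 ^ k * (Nat.factorial k : ℝ) ^ 2 * (2 * k + 1))


noncomputable def binCoeff (k : ℕ) : ℝ :=
  (Nat.factorial (2 * k) : ℝ) / (4 ^ k * (Nat.factorial k : ℝ) ^ 2)

lemma binCoeff_pos (k : ℕ) : 0 < binCoeff k := by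
  unfold binCoeff
  positivity

lemma binCoeff_zero : binCoeff 0 = 1 := by simp [binCoeff]

lemma binCoeff_rec (k : ℕ) : (2 * (k : ℝ) + 2) * binCoeff (k + 1) = (2 * k + 1) * binCoeff k := by
  have h1 : 2 * (k + 1) = 2 * k + 1 + 1 := by ring
  have hk : (Nat.factorial k : ℝ) ≠ 0 := Nat.cast_ne_zero.2 (Nat.factorial_ne_zero k)
  unfold binCoeff
  rw [h1, Nat.factorial_succ, Nat.factorial_succ, Nat.factorial_succ]
  push_cast
  field_simp
  ring

lemma binCoeff_le (k : ℕ) : binCoeff k ≤ 1 / Real.sqrt (k + 1) := by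
  induction k with
  | zero => simp [binCoeff_zero]
  | succ k ih =>
    push_cast
    have hs1 : (0:ℝ) < Real.sqrt (k + 1) := Real.sqrt_pos.2 (by positivity)
    have hs2 : (0:ℝ) < Real.sqrt (k + 1 + 1) := Real.sqrt_pos.2 (by positivity)
    have hrec := binCoeff_rec k
    have hb : binCoeff (k + 1) = (2 * k + 1) / (2 * k + 2) * binCoeff k := by
      field_simp at hrec ⊢
      linarith [hrec]
    rw [hb]
    have key : (2 * (k:ℝ) + 1) * Real.sqrt (k + 1 + 1) ≤ (2 * k + 2) * Real.sqrt (k + 1) := by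
      have h1 : (2 * (k:ℝ) + 1) * Real.sqrt (k + 1 + 1) = Real.sqrt ((2 * k + 1) ^ 2 * (k + 1 + 1)) := by
        rw [Real.sqrt_mul (by positivity), Real.sqrt_sq (by positivity)]
      have h2 : (2 * (k:ℝ) + 2) * Real.sqrt (k + 1) = Real.sqrt ((2 * k + 2) ^ 2 * (k + 1)) := by
        rw [Real.sqrt_mul (by positivity), Real.sqrt_sq (by positivity)]
      rw [h1, h2]
      apply Real.sqrt_le_sqrt
      nlinarith [sq_nonneg ((k:ℝ))]
    calc (2 * (k:ℝ) + 1) / (2 * k + 2) * binCoeff k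
        ≤ (2 * (k:ℝ) + 1) / (2 * k + 2) * (1 / Real.sqrt (k + 1)) := by
          apply mul_le_mul_of_nonneg_left ih (by positivity)
      _ ≤ 1 / Real.sqrt (k + 1 + 1) := by
          rw [div_mul_div_comm, mul_one, div_le_div_iff₀ (by positivity) hs2]
          linarith [key]
    
lemma binCoeff_le_one (k : ℕ) : binCoeff k ≤ 1 := by
  refine (binCoeff_le k).trans ?_
  rw [div_le_one (Real.sqrt_pos.2 (by positivity))]
  exact Real.one_le_sqrt.mpr (le_add_of_nonneg_left (Nat.cast_nonneg k))

lemma arcsinCoeff_eq (k : ℕ) : arcsinCoeff k = binCoeff k / (2 * k + 1) := by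
  unfold arcsinCoeff binCoeff
  rw [div_div]

lemma arcsinCoeff_pos (k : ℕ) : 0 < arcsinCoeff k := by
  rw [arcsinCoeff_eq]
  exact div_pos (binCoeff_pos k) (by positivity)

lemma arcsinCoeff_le (k : ℕ) : arcsinCoeff k ≤ ((k + 1 : ℝ) * Real.sqrt (k + 1))⁻¹ := by
  rw [arcsinCoeff_eq]
  have h1 : binCoeff k / (2 * (k:ℝ) + 1) ≤ (1 / Real.sqrt (k + 1)) / (k + 1) := by
    apply div_le_div₀ (by positivity) ((binCoeff_le k).trans le_rfl) (by positivity)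
    linarith [Nat.cast_nonneg (α := ℝ) k]
  calc binCoeff k / (2 * (k:ℝ) + 1) ≤ (1 / Real.sqrt (k + 1)) / (k + 1) := h1
    _ = ((k + 1 : ℝ) * Real.sqrt (k + 1))⁻¹ := by
        rw [div_div, one_div, mul_comm]

lemma summable_aux : Summable (fun k : ℕ => ((k + 1 : ℝ) * Real.sqrt (k + 1))⁻¹) := by
  have key : ∀ k : ℕ, ((k + 1 : ℝ) * Real.sqrt (k + 1))⁻¹ = ((((k+1 : ℕ)):ℝ) ^ (3/2 : ℝ))⁻¹ := by
    intro k
    have h0 : (0:ℝ) ≤ (k:ℝ) + 1 := by positivity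
    push_cast
    rw [show (3/2 : ℝ) = 1 + 1/2 by norm_num, Real.rpow_add (by positivity), Real.rpow_one,
      ← Real.sqrt_eq_rpow]
  simp_rw [key]
  exact (summable_nat_add_iff 1).mpr (Real.summable_nat_rpow_inv.mpr (by norm_num))

lemma summable_arcsinCoeff : Summable arcsinCoeff :=
  Summable.of_nonneg_of_le (fun k => (arcsinCoeff_pos k).le) arcsinCoeff_le summable_aux

lemma summable_term {x : ℝ} (hx : |x| ≤ 1) :
    Summable (fun k : ℕ => arcsinCoeff k * x ^ (2 * k + 1)) := by
  apply Summable.of_norm_bounded summable_arcsinCoeff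
  intro k
  rw [norm_mul, norm_pow, Real.norm_eq_abs, Real.norm_eq_abs,
    abs_of_pos (arcsinCoeff_pos k)]
  calc arcsinCoeff k * |x| ^ (2 * k + 1) ≤ arcsinCoeff k * 1 :=
        mul_le_mul_of_nonneg_left (pow_le_one₀ (abs_nonneg x) hx) (arcsinCoeff_pos k).le
    _ = arcsinCoeff k := mul_one _

noncomputable def G (x : ℝ) : ℝ := ∑' k : ℕ, binCoeff k * x ^ (2 * k)

lemma summable_G {x : ℝ} (hx : |x| < 1) :
    Summable (fun k : ℕ => binCoeff k * x ^ (2 * k)) := by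
  apply Summable.of_norm_bounded (g := fun k => (|x| ^ 2) ^ k)
    (summable_geometric_of_lt_one (by positivity) (by nlinarith [abs_nonneg x]))
  intro k
  rw [norm_mul, norm_pow, Real.norm_eq_abs, Real.norm_eq_abs, abs_of_pos (binCoeff_pos k),
    ← pow_mul]
  calc binCoeff k * |x| ^ (2 * k) ≤ 1 * |x| ^ (2 * k) :=
        mul_le_mul_of_nonneg_right (binCoeff_le_one k) (by positivity)
    _ = |x| ^ (2 * k) := one_mul _

lemma summable_Gd {x : ℝ} {r : ℝ} (hr0 : 0 ≤ r) (hr1 : r < 1) (hx : |x| ≤ r) :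
    Summable (fun k : ℕ => binCoeff k * (((2 * k : ℕ) : ℝ) * x ^ (2 * k - 1))) := by
  apply Summable.of_norm_bounded (g := fun k : ℕ => 2 * ((k : ℝ) ^ 1 * r ^ k))
    ((summable_pow_mul_geometric_of_norm_lt_one (R := ℝ) 1 (by rwa [Real.norm_eq_abs, abs_of_nonneg hr0])).mul_left 2)
  intro k
  match k with
  | 0 => simp
  | (m + 1) =>
    set k := m + 1 with hk
    rw [norm_mul, norm_mul, norm_pow, Real.norm_eq_abs, Real.norm_eq_abs, Real.norm_eq_abs,
      abs_of_pos (binCoeff_pos k), abs_of_nonneg (by positivity : (0:ℝ) ≤ ((2 * k : ℕ) : ℝ))]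
    have h1 : |x| ^ (2 * k - 1) ≤ r ^ (2 * k - 1) :=
      pow_le_pow_left₀ (abs_nonneg x) hx _
    have h2 : r ^ (2 * k - 1) ≤ r ^ k := pow_le_pow_of_le_one hr0 hr1.le (by omega)
    calc binCoeff k * (((2 * k : ℕ) : ℝ) * |x| ^ (2 * k - 1))
        ≤ 1 * (((2 * k : ℕ) : ℝ) * r ^ k) := by
          apply mul_le_mul (binCoeff_le_one k) ?_ (by positivity) zero_le_one
          exact mul_le_mul_of_nonneg_left (h1.trans h2) (by positivity)
      _ = 2 * ((k : ℝ) ^ 1 * r ^ k) := by push_cast; ring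

lemma hasDerivAt_G {x : ℝ} (hx : |x| < 1) :
    HasDerivAt G (∑' k : ℕ, binCoeff k * (((2 * k : ℕ) : ℝ) * x ^ (2 * k - 1))) x := by
  set r : ℝ := (1 + |x|) / 2 with hr
  have hr0 : 0 ≤ r := by positivity
  have hr1 : r < 1 := by rw [hr]; linarith
  have hxr : |x| < r := by rw [hr]; linarith
  have hmem : x ∈ Set.Ioo (-r) r := by
    constructor <;> [linarith [neg_abs_le x]; linarith [le_abs_self x]]
  exact hasDerivAt_tsum_of_isPreconnected
    ((summable_pow_mul_geometric_of_norm_lt_one (R := ℝ) 1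
      (by rwa [Real.norm_eq_abs, abs_of_nonneg hr0])).mul_left 2)
    isOpen_Ioo isPreconnected_Ioo
    (fun n y _ => (hasDerivAt_pow (2 * n) y).const_mul (binCoeff n))
    (fun n y hy => by
      have hy' : |y| ≤ r := (abs_lt.mpr ⟨hy.1, hy.2⟩).le
      calc ‖binCoeff n * (((2 * n : ℕ) : ℝ) * y ^ (2 * n - 1))‖
          ≤ 2 * ((n : ℝ) ^ 1 * r ^ n) := by
            rw [norm_mul, norm_mul, norm_pow, Real.norm_eq_abs, Real.norm_eq_abs,
              Real.norm_eq_abs, abs_of_pos (binCoeff_pos n),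
              abs_of_nonneg (by positivity : (0:ℝ) ≤ ((2 * n : ℕ) : ℝ))]
            match n with
            | 0 => simp
            | (m + 1) =>
              set n := m + 1 with hn
              have h1 : |y| ^ (2 * n - 1) ≤ r ^ (2 * n - 1) :=
                pow_le_pow_left₀ (abs_nonneg y) hy' _
              have h2 : r ^ (2 * n - 1) ≤ r ^ n := pow_le_pow_of_le_one hr0 hr1.le (by omega)
              calc binCoeff n * (((2 * n : ℕ) : ℝ) * |y| ^ (2 * n - 1))
                  ≤ 1 * (((2 * n : ℕ) : ℝ) * r ^ n) := by
                    apply mul_le_mul (binCoeff_le_one n) ?_ (by positivity) zero_le_one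
                    exact mul_le_mul_of_nonneg_left (h1.trans h2) (by positivity)
                _ = 2 * ((n : ℝ) ^ 1 * r ^ n) := by push_cast; ring)
    (Set.mem_Ioo.mpr ⟨by nlinarith [abs_nonneg x], by nlinarith [abs_nonneg x]⟩ :
      (0:ℝ) ∈ Set.Ioo (-r) r)
    (summable_G (by norm_num : |(0:ℝ)| < 1))
    hmem

lemma key_identity {x : ℝ} (hx : |x| < 1) :
    (1 - x ^ 2) * (∑' k : ℕ, binCoeff k * (((2 * k : ℕ) : ℝ) * x ^ (2 * k - 1))) = x * G x := by
  set d : ℕ → ℝ := fun k => binCoeff k * (((2 * k : ℕ) : ℝ) * x ^ (2 * k - 1)) with hd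
  set D : ℝ := ∑' k, d k with hD
  have hsum : Summable d := summable_Gd (abs_nonneg x) hx le_rfl
  have hDsum : HasSum d D := hsum.hasSum
  have hshift : HasSum (fun k => d (k + 1)) D := by
    have h := (hasSum_nat_add_iff' (f := d) 1).mpr hDsum
    simpa [hd] using h
  have hfunA : (fun k => d (k + 1)) =
      fun k : ℕ => (2 * (k:ℝ) + 1) * binCoeff k * x ^ (2 * k + 1) := by
    funext k
    have h2 : 2 * (k + 1) - 1 = 2 * k + 1 := by omega
    simp only [hd, h2]
    push_cast
    linear_combination x ^ (2 * k + 1) * (binCoeff_rec k)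
  have hA : HasSum (fun k : ℕ => (2 * (k:ℝ) + 1) * binCoeff k * x ^ (2 * k + 1)) D :=
    hfunA ▸ hshift
  have hfunB : (fun k : ℕ => x ^ 2 * d k) =
      fun k : ℕ => 2 * (k:ℝ) * binCoeff k * x ^ (2 * k + 1) := by
    funext k
    match k with
    | 0 => simp [hd]
    | (m + 1) =>
      have h2 : 2 * (m + 1) - 1 = 2 * m + 1 := by omega
      have h3 : 2 * (m + 1) + 1 = (2 * m + 1) + 2 := by omega
      simp only [hd, h2, h3]
      push_cast
      ring
  have hB : HasSum (fun k : ℕ => 2 * (k:ℝ) * binCoeff k * x ^ (2 * k + 1)) (x ^ 2 * D) :=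
    hfunB ▸ (hDsum.mul_left (x ^ 2))
  have hC : HasSum (fun k : ℕ => binCoeff k * x ^ (2 * k + 1)) ((1 - x ^ 2) * D) := by
    have h := hA.sub hB
    have hfunC : (fun k : ℕ => (2 * (k:ℝ) + 1) * binCoeff k * x ^ (2 * k + 1)
        - 2 * (k:ℝ) * binCoeff k * x ^ (2 * k + 1)) =
        fun k : ℕ => binCoeff k * x ^ (2 * k + 1) := by
      funext k; ring
    have h2 : D - x ^ 2 * D = (1 - x ^ 2) * D := by ring
    rw [hfunC, h2] at h
    exact h
  have hGsum : HasSum (fun k : ℕ => binCoeff k * x ^ (2 * k)) (G x) := (summable_G hx).hasSum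
  have hXG : HasSum (fun k : ℕ => binCoeff k * x ^ (2 * k + 1)) (x * G x) := by
    have h := hGsum.mul_left x
    have hfun : (fun k : ℕ => x * (binCoeff k * x ^ (2 * k))) =
        fun k : ℕ => binCoeff k * x ^ (2 * k + 1) := by
      funext k; ring
    rwa [hfun] at h
  exact hC.unique hXG

lemma G_zero : G 0 = 1 := by
  have h : G 0 = binCoeff 0 * (0:ℝ) ^ (2 * 0) := by
    apply tsum_eq_single 0
    intro j hj
    simp [zero_pow (by omega : 2 * j ≠ 0)]
  simp [h, binCoeff_zero]

lemma sqrtG_deriv {x : ℝ} (hx : |x| < 1) :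
    HasDerivAt (fun y => Real.sqrt (1 - y ^ 2) * G y) 0 x := by
  have hx2 : 0 < 1 - x ^ 2 := by nlinarith [abs_nonneg x, sq_abs x, abs_lt.mp hx]
  set s := Real.sqrt (1 - x ^ 2) with hs
  have hspos : 0 < s := Real.sqrt_pos.2 hx2
  have hss : s * s = 1 - x ^ 2 := Real.mul_self_sqrt hx2.le
  set D : ℝ := ∑' k : ℕ, binCoeff k * (((2 * k : ℕ) : ℝ) * x ^ (2 * k - 1)) with hD
  have hGd : HasDerivAt G D x := hasDerivAt_G hx
  have hinner : HasDerivAt (fun y : ℝ => 1 - y ^ 2) (-(2 * x)) x := by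
    simpa using (hasDerivAt_pow 2 x).const_sub 1
  have hsd : HasDerivAt (fun y => Real.sqrt (1 - y ^ 2)) (-x / s) x := by
    have h := (Real.hasDerivAt_sqrt hx2.ne').comp x hinner
    refine h.congr_deriv ?_
    rw [← hs]
    field_simp
  have hprod := hsd.mul hGd
  have hkey := key_identity hx
  have hzero : (-x / s) * G x + s * D = 0 := by
    have hsD : s * D = x * G x / s := by
      rw [eq_div_iff hspos.ne']
      calc s * D * s = (s * s) * D := by ring
        _ = (1 - x ^ 2) * D := by rw [hss]
        _ = x * G x := hkey
    rw [hsD]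
    field_simp
    ring
  rw [← hzero]
  exact hprod

lemma G_eq {x : ℝ} (hx : |x| < 1) : G x = (Real.sqrt (1 - x ^ 2))⁻¹ := by
  have hx2 : 0 < 1 - x ^ 2 := by nlinarith [abs_nonneg x, sq_abs x, abs_lt.mp hx]
  have hspos : 0 < Real.sqrt (1 - x ^ 2) := Real.sqrt_pos.2 hx2
  have hconst : Real.sqrt (1 - x ^ 2) * G x = Real.sqrt (1 - 0 ^ 2) * G 0 := by
    apply Convex.is_const_of_fderivWithin_eq_zero (𝕜 := ℝ) (convex_Ioo (-1:ℝ) 1)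
      (f := fun y => Real.sqrt (1 - y ^ 2) * G y)
    · intro y hy
      have hy' : |y| < 1 := abs_lt.mpr ⟨hy.1, hy.2⟩
      exact ((sqrtG_deriv hy').differentiableAt.differentiableWithinAt)
    · intro y hy
      have hy' : |y| < 1 := abs_lt.mpr ⟨hy.1, hy.2⟩
      rw [(sqrtG_deriv hy').hasFDerivAt.hasFDerivWithinAt.fderivWithin (isOpen_Ioo.uniqueDiffWithinAt hy)]
      ext
      simp
    · exact Set.mem_Ioo.mpr ⟨(abs_lt.mp hx).1, (abs_lt.mp hx).2⟩
    · exact Set.mem_Ioo.mpr ⟨by norm_num, by norm_num⟩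
  rw [G_zero] at hconst
  norm_num at hconst
  field_simp
  linarith [hconst]

noncomputable def Farc (x : ℝ) : ℝ := ∑' k : ℕ, arcsinCoeff k * x ^ (2 * k + 1)

lemma term_eq (k : ℕ) : arcsinCoeff k * ((2 * (k:ℝ) + 1)) = binCoeff k := by
  rw [arcsinCoeff_eq, div_mul_cancel₀]
  positivity

lemma hasDerivAt_F {x : ℝ} (hx : |x| < 1) : HasDerivAt Farc (G x) x := by
  unfold Farc
  set r : ℝ := (1 + |x|) / 2 with hr
  have hr0 : 0 ≤ r := by positivity
  have hr1 : r < 1 := by rw [hr]; linarith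
  have hxr : |x| < r := by rw [hr]; linarith
  have hrlt : ‖r ^ 2‖ < 1 := by
    rw [Real.norm_eq_abs, abs_of_nonneg (by positivity)]
    nlinarith
  have hbound : ∀ n : ℕ, ∀ y ∈ Set.Ioo (-r) r,
      ‖arcsinCoeff n * (((2 * n + 1 : ℕ) : ℝ) * y ^ (2 * n + 1 - 1))‖ ≤ (r ^ 2) ^ n := by
    intro n y hy
    have hy' : |y| ≤ r := (abs_lt.mpr ⟨hy.1, hy.2⟩).le
    have h1 : 2 * n + 1 - 1 = 2 * n := by omega
    rw [h1, norm_mul, norm_mul, norm_pow, Real.norm_eq_abs, Real.norm_eq_abs, Real.norm_eq_abs,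
      abs_of_pos (arcsinCoeff_pos n),
      abs_of_nonneg (by positivity : (0:ℝ) ≤ ((2 * n + 1 : ℕ) : ℝ)), ← mul_assoc]
    have h2 : arcsinCoeff n * ((2 * n + 1 : ℕ) : ℝ) = binCoeff n := by
      rw [← term_eq n]; push_cast; ring
    rw [h2]
    calc binCoeff n * |y| ^ (2 * n) ≤ 1 * r ^ (2 * n) := by
          apply mul_le_mul (binCoeff_le_one n) (pow_le_pow_left₀ (abs_nonneg y) hy' _)
            (by positivity) zero_le_one
      _ = r ^ (2 * n) := one_mul _
      _ = (r ^ 2) ^ n := pow_mul r 2 n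
  have hder := hasDerivAt_tsum_of_isPreconnected
    (summable_geometric_of_lt_one (by positivity) (by rwa [Real.norm_eq_abs, abs_of_nonneg (by positivity)] at hrlt))
    isOpen_Ioo isPreconnected_Ioo
    (fun n y (_ : y ∈ Set.Ioo (-r) r) =>
      (hasDerivAt_pow (2 * n + 1) y).const_mul (arcsinCoeff n))
    hbound
    (Set.mem_Ioo.mpr ⟨by nlinarith [abs_nonneg x], by nlinarith [abs_nonneg x]⟩ :
      (0:ℝ) ∈ Set.Ioo (-r) r)
    (summable_term (by norm_num : |(0:ℝ)| ≤ 1))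
    (Set.mem_Ioo.mpr ⟨by linarith [neg_abs_le x], by linarith [le_abs_self x]⟩ :
      x ∈ Set.Ioo (-r) r)
  have heq : (∑' n : ℕ, arcsinCoeff n * (((2 * n + 1 : ℕ) : ℝ) * x ^ (2 * n + 1 - 1))) = G x := by
    apply tsum_congr
    intro n
    have h1 : 2 * n + 1 - 1 = 2 * n := by omega
    rw [h1, ← mul_assoc]
    congr 1
    rw [← term_eq n]; push_cast; ring
  rw [heq] at hder
  exact hder

lemma F_zero : Farc 0 = 0 := by
  unfold Farc
  have : ∀ k : ℕ, arcsinCoeff k * (0:ℝ) ^ (2 * k + 1) = 0 := by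
    intro k
    simp [zero_pow (by omega : 2 * k + 1 ≠ 0)]
  simp only [this, tsum_zero]

lemma F_eq_arcsin_Ioo : Set.EqOn Farc Real.arcsin (Set.Ioo (-1:ℝ) 1) := by
  intro x hx
  have hx' : |x| < 1 := abs_lt.mpr ⟨hx.1, hx.2⟩
  have hconst : Farc x - Real.arcsin x = Farc 0 - Real.arcsin 0 := by
    apply Convex.is_const_of_fderivWithin_eq_zero (𝕜 := ℝ) (convex_Ioo (-1:ℝ) 1)
      (f := fun y => Farc y - Real.arcsin y)
    · intro y hy
      have hy' : |y| < 1 := abs_lt.mpr ⟨hy.1, hy.2⟩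
      exact ((hasDerivAt_F hy').sub
        (Real.hasDerivAt_arcsin (by linarith [(abs_lt.mp hy').1]) (by linarith [(abs_lt.mp hy').2]))).differentiableAt.differentiableWithinAt
    · intro y hy
      have hy' : |y| < 1 := abs_lt.mpr ⟨hy.1, hy.2⟩
      have hder : HasDerivAt (fun y => Farc y - Real.arcsin y) 0 y := by
        have h := (hasDerivAt_F hy').sub
          (Real.hasDerivAt_arcsin (by linarith [(abs_lt.mp hy').1]) (by linarith [(abs_lt.mp hy').2]))
        have h2 : G y - 1 / Real.sqrt (1 - y ^ 2) = 0 := by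
          rw [G_eq hy', one_div, sub_self]
        rwa [h2] at h
      rw [hder.hasFDerivAt.hasFDerivWithinAt.fderivWithin (isOpen_Ioo.uniqueDiffWithinAt hy)]
      ext
      simp
    · exact hx
    · exact Set.mem_Ioo.mpr ⟨by norm_num, by norm_num⟩
  rw [F_zero, Real.arcsin_zero, sub_zero] at hconst
  exact sub_eq_zero.mp hconst

lemma F_continuousOn : ContinuousOn Farc (Set.Icc (-1:ℝ) 1) := by
  apply continuousOn_tsum (u := arcsinCoeff)
    (fun k => (continuous_const.mul (continuous_pow (2 * k + 1))).continuousOn)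
    summable_arcsinCoeff
  intro k y hy
  have hy' : |y| ≤ 1 := abs_le.mpr ⟨hy.1, hy.2⟩
  simp only [Pi.mul_apply]
  rw [norm_mul, norm_pow, Real.norm_eq_abs, Real.norm_eq_abs, abs_of_pos (arcsinCoeff_pos k)]
  calc arcsinCoeff k * |y| ^ (2 * k + 1) ≤ arcsinCoeff k * 1 :=
        mul_le_mul_of_nonneg_left (pow_le_one₀ (abs_nonneg y) hy') (arcsinCoeff_pos k).le
    _ = arcsinCoeff k := mul_one _

lemma F_eq_arcsin_Icc : Set.EqOn Farc Real.arcsin (Set.Icc (-1:ℝ) 1) := by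
  intro y hy
  have hclose : y ∈ closure (Set.Ioo (-1:ℝ) 1) := by
    rw [closure_Ioo (by norm_num : (-1:ℝ) ≠ 1)]
    exact hy
  have hne : (nhdsWithin y (Set.Ioo (-1:ℝ) 1)).NeBot :=
    mem_closure_iff_nhdsWithin_neBot.1 hclose
  have h1 : Filter.Tendsto Farc (nhdsWithin y (Set.Ioo (-1:ℝ) 1)) (nhds (Farc y)) :=
    (F_continuousOn y hy).mono Set.Ioo_subset_Icc_self
  have h2 : Filter.Tendsto Real.arcsin (nhdsWithin y (Set.Ioo (-1:ℝ) 1)) (nhds (Real.arcsin y)) :=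
    (Real.continuous_arcsin.continuousAt).continuousWithinAt
  have h3 : Filter.Tendsto Farc (nhdsWithin y (Set.Ioo (-1:ℝ) 1)) (nhds (Real.arcsin y)) := by
    apply h2.congr'
    filter_upwards [self_mem_nhdsWithin] with z hz
    exact (F_eq_arcsin_Ioo hz).symm
  exact tendsto_nhds_unique h1 h3

/-- For every real `x` with `|x| ≤ 1`, the series `Σ_{k=0}^∞ c_k x^(2k+1)` converges and
its sum equals `arcsin x`. -/
theorem hasSum_arcsin_taylor_series (x : ℝ) (hx : |x| ≤ 1) :
    HasSum (fun k : ℕ => arcsinCoeff k * x ^ (2 * k + 1)) (Real.arcsin x) := by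
  have h : HasSum (fun k : ℕ => arcsinCoeff k * x ^ (2 * k + 1)) (Farc x) :=
    (summable_term hx).hasSum
  rwa [F_eq_arcsin_Icc (Set.mem_Icc.mpr ⟨(abs_le.mp hx).1, (abs_le.mp hx).2⟩)] at h
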